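/- Let r be a positive integer, let G be a finite simple graph with at least two vertices, and let s be any vertex of G. Then rk_r(G) ≤ rk_r(G − s) + 1. -/
import Mathlib


open Classical

/-- The closed `r`-neighborhood of `c` inside the induced subgraph `G[A]`:
all vertices of `A` joined to `c` by a walk of length at most `r` staying in `A`. -/
noncomputable def ball {V : Type*} (G : SimpleGraph V) (r : ℕ) (A : Finset V) (c : V) :
    Finset V :=
  A.filter (fun v => ∃ p : G.Walk c v, p.length ≤ r ∧ ∀ x ∈ p.support, x ∈ A)

/-- The `r`-splitter rank of the induced subgraph `G[A]` (with `rank ∅ = 0`). -/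
noncomputable def splitterRank {V : Type*} [DecidableEq V] (G : SimpleGraph V) (r : ℕ)
    (A : Finset V) : ℕ :=
  if _ : A.Nonempty then
    1 + A.attach.sup (fun c =>
      (ball G r A c.1).attach.inf'
        (Finset.attach_nonempty_iff.2 ⟨c.1, Finset.mem_filter.2 ⟨c.2,
          SimpleGraph.Walk.nil, by simp, by simp [c.2]⟩⟩)
        (fun s => splitterRank G r ((ball G r A c.1).erase s.1)))
  else 0
termination_by A.card
decreasing_by
  exact lt_of_lt_of_le (Finset.card_erase_lt_of_mem s.2)
    (Finset.card_le_card (Finset.filter_subset _ _))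

set_option maxHeartbeats 1000000 in
lemma ball_subset' {V : Type*} (G : SimpleGraph V) (r : ℕ) (A : Finset V) (c : V) :
    ball G r A c ⊆ A := Finset.filter_subset _ _

set_option maxHeartbeats 1000000 in
lemma mem_ball_self' {V : Type*} (G : SimpleGraph V) (r : ℕ) {A : Finset V} {c : V}
    (hc : c ∈ A) : c ∈ ball G r A c :=
  Finset.mem_filter.2 ⟨hc, SimpleGraph.Walk.nil, by simp, by simp [hc]⟩

set_option maxHeartbeats 1000000 in
lemma ball_mono' {V : Type*} (G : SimpleGraph V) (r : ℕ) {A B : Finset V} (h : A ⊆ B)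
    (c : V) : ball G r A c ⊆ ball G r B c := by
  intro v hv
  rw [ball, Finset.mem_filter] at hv ⊢
  obtain ⟨hvA, p, hp, hsupp⟩ := hv
  exact ⟨h hvA, p, hp, fun x hx => h (hsupp x hx)⟩

set_option maxHeartbeats 1000000 in
lemma splitterRank_mono {V : Type*} [DecidableEq V] (G : SimpleGraph V) (r : ℕ) :
    ∀ (n : ℕ) (A B : Finset V), B.card ≤ n → A ⊆ B →
      splitterRank G r A ≤ splitterRank G r B := by
  intro n
  induction n with
  | zero =>
    intro A B hB hAB
    have : B = ∅ := Finset.card_eq_zero.1 (Nat.le_zero.1 hB)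
    subst this
    rw [Finset.subset_empty] at hAB
    subst hAB
    exact le_refl _
  | succ n ih =>
    intro A B hB hAB
    by_cases hA : A.Nonempty
    · have hBne : B.Nonempty := hA.mono hAB
      rw [splitterRank, dif_pos hA, splitterRank, dif_pos hBne]
      refine Nat.add_le_add_left (Finset.sup_le fun c _ => ?_) 1
      have hcB : c.1 ∈ B := hAB c.2
      refine le_trans ?_ (Finset.le_sup (Finset.mem_attach _ ⟨c.1, hcB⟩))
      refine Finset.le_inf' _ _ fun sB _ => ?_
      have hballAB : ball G r A c.1 ⊆ ball G r B c.1 := ball_mono' G r hAB c.1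
      have hcard : ((ball G r B c.1).erase sB.1).card ≤ n := by
        have h1 : ((ball G r B c.1).erase sB.1).card < (ball G r B c.1).card :=
          Finset.card_erase_lt_of_mem sB.2
        have h2 : (ball G r B c.1).card ≤ B.card :=
          Finset.card_le_card (ball_subset' G r B c.1)
        omega
      by_cases hs : sB.1 ∈ ball G r A c.1
      · refine le_trans (Finset.inf'_le _ (Finset.mem_attach _ ⟨sB.1, hs⟩)) ?_
        exact ih _ _ hcard (Finset.erase_subset_erase _ hballAB)
      · have hcball : c.1 ∈ ball G r A c.1 := mem_ball_self' G r c.2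
        refine le_trans (Finset.inf'_le _ (Finset.mem_attach _ ⟨c.1, hcball⟩)) ?_
        refine ih _ _ hcard ?_
        intro x hx
        have hxA : x ∈ ball G r A c.1 := Finset.erase_subset _ _ hx
        exact Finset.mem_erase.2 ⟨fun h => hs (h ▸ hxA), hballAB hxA⟩
    · rw [Finset.not_nonempty_iff_eq_empty] at hA
      subst hA
      rw [splitterRank, dif_neg (by simp)]
      exact Nat.zero_le _

set_option maxHeartbeats 1000000 in
/-- For a graph with at least two vertices, `rk_r(G) ≤ rk_r(G - s) + 1`. -/
theorem rank_le_rank_erase_add_one {V : Type*} [Fintype V] [DecidableEq V]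
    (G : SimpleGraph V) (r : ℕ) (hr : 0 < r) (h2 : 2 ≤ Fintype.card V) (s : V) :
    splitterRank G r Finset.univ ≤ splitterRank G r (Finset.univ.erase s) + 1 := by
  have huniv : (Finset.univ : Finset V).Nonempty := ⟨s, Finset.mem_univ s⟩
  rw [splitterRank, dif_pos huniv, add_comm]
  refine Nat.add_le_add_right (Finset.sup_le fun c _ => ?_) 1
  by_cases hs : s ∈ ball G r Finset.univ c.1
  · refine le_trans (Finset.inf'_le _ (Finset.mem_attach _ ⟨s, hs⟩)) ?_
    refine splitterRank_mono G r _ _ _ le_rfl ?_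
    exact Finset.erase_subset_erase _ (Finset.subset_univ _)
  · have hcball : c.1 ∈ ball G r Finset.univ c.1 := mem_ball_self' G r c.2
    refine le_trans (Finset.inf'_le _ (Finset.mem_attach _ ⟨c.1, hcball⟩)) ?_
    refine splitterRank_mono G r _ _ _ le_rfl ?_
    intro x hx
    have hxb : x ∈ ball G r Finset.univ c.1 := Finset.erase_subset _ _ hx
    exact Finset.mem_erase.2 ⟨fun h => hs (h ▸ hxb), Finset.mem_univ _⟩
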